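/- Let (T_i, 𝒯_i), i = 1,…,n, and (S, 𝒮) be measurable spaces whose σ-algebras are universal completions of countably generated σ-algebras, let (η_1,…,η_n) be a belief map profile consistent under a common prior p on S × T, and let ν = ν_0 ⊗ ν_1 ⊗ ⋯ ⊗ ν_n be a product probability measure with p ≪ ν. Then for each i there exists a probability kernel η̃_i from T_i to S × T_{-i} such that η̃_i(t_i, ·) ≪ ν_0 ⊗ ν_{-i} for every t_i ∈ T_i, and η̃_i agrees with η_i for (p ∘ π_i^{-1})-almost every t_i. -/

import Mathlib

open MeasureTheory ProbabilityTheory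
open scoped MeasureTheory

/-- The completion of a σ-algebra `m` with respect to a measure `μ`. -/
noncomputable def completionAlg {X : Type*} (m : MeasurableSpace X) (μ : @Measure X m) :
    MeasurableSpace X where
  MeasurableSet' s := @NullMeasurableSet X m s μ
  measurableSet_empty := @MeasurableSet.nullMeasurableSet X m μ ∅ MeasurableSet.empty
  measurableSet_compl _ hs := @NullMeasurableSet.compl X m μ _ hs
  measurableSet_iUnion _ hs := @NullMeasurableSet.iUnion X m μ _ _ _ hs

/-- The universal completion of a σ-algebra. -/
noncomputable def univCompletion {X : Type*} (m : MeasurableSpace X) : MeasurableSpace X :=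
  ⨅ (μ : @Measure X m) (_ : @IsProbabilityMeasure X m μ), completionAlg m μ

open scoped symmDiff ENNReal

lemma le_univCompletion {X : Type*} (m : MeasurableSpace X) : m ≤ univCompletion m :=
  le_iInf fun μ => le_iInf fun _ => fun s hs => @MeasurableSet.nullMeasurableSet X m μ s hs

lemma measurableSet_univCompletion {X : Type*} {m : MeasurableSpace X} {s : Set X} :
    MeasurableSet[univCompletion m] s ↔
      ∀ μ : @Measure X m, @IsProbabilityMeasure X m μ → @NullMeasurableSet X m s μ := by
  show MeasurableSet[⨅ (μ : @Measure X m) (_ : @IsProbabilityMeasure X m μ), completionAlg m μ] s ↔ _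
  simp only [MeasurableSpace.measurableSet_iInf]
  rfl

lemma comap_univCompletion_le {X Y : Type*} (m₀X : MeasurableSpace X) (m₀Y : MeasurableSpace Y)
    {g : X → Y} (hg : @Measurable X Y m₀X m₀Y g) :
    MeasurableSpace.comap g (univCompletion m₀Y) ≤ univCompletion m₀X := by
  letI := m₀X; letI := m₀Y
  rintro s ⟨B, hB, rfl⟩
  rw [measurableSet_univCompletion] at hB ⊢
  intro μ hμ
  haveI := hμ
  haveI : IsProbabilityMeasure (μ.map g) := Measure.isProbabilityMeasure_map hg.aemeasurable
  obtain ⟨B', hsub, hB', hae⟩ := (hB (μ.map g) inferInstance).exists_measurable_superset_ae_eq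
  refine (hg hB').nullMeasurableSet.congr ?_
  rw [← measure_symmDiff_eq_zero_iff] at hae ⊢
  have hpre : (g ⁻¹' B') ∆ (g ⁻¹' B) = g ⁻¹' (B' ∆ B) := by
    simp [Set.symmDiff_def, Set.preimage_union, Set.preimage_diff]
  rw [hpre]
  exact le_antisymm ((Measure.le_map_apply hg.aemeasurable _).trans hae.le) zero_le

lemma measure_ext_of_univCompletion {X : Type*} {m₀ m : MeasurableSpace X}
    (h₀ : m₀ ≤ m) (hm : m ≤ univCompletion m₀)
    (μ ν : @Measure X m) (hμ : @IsProbabilityMeasure X m μ) (hν : @IsProbabilityMeasure X m ν)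
    (h : ∀ s, MeasurableSet[m₀] s → μ s = ν s) : μ = ν := by
  letI := m
  haveI := hμ; haveI := hν
  refine Measure.ext fun s hs => ?_
  set ρ : @Measure X m₀ := (2 : ℝ≥0∞)⁻¹ • (μ.trim h₀ + ν.trim h₀) with hρ
  haveI : @IsProbabilityMeasure X m₀ ρ := by
    constructor
    rw [hρ, Measure.smul_apply, Measure.add_apply,
      trim_measurableSet_eq h₀ MeasurableSet.univ, trim_measurableSet_eq h₀ MeasurableSet.univ,
      measure_univ, measure_univ, smul_eq_mul]
    rw [one_add_one_eq_two]; exact ENNReal.inv_mul_cancel two_ne_zero ENNReal.ofNat_ne_top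
  obtain ⟨s₀, hsub, hs₀, hae⟩ :=
    (measurableSet_univCompletion.mp (hm s hs) ρ inferInstance).exists_measurable_superset_ae_eq
  rw [← measure_symmDiff_eq_zero_iff] at hae
  have key : ∀ κ : @Measure X m, @IsProbabilityMeasure X m κ →
      κ.trim h₀ (s₀ ∆ s) ≤ 2 * ρ (s₀ ∆ s) → κ (s₀ ∆ s) = 0 := by
    intro κ hκ hle
    rw [hae, mul_zero] at hle
    exact le_antisymm ((le_trim h₀).trans hle) zero_le
  have hμ0 : μ (s₀ ∆ s) = 0 := by
    refine key μ hμ ?_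
    rw [hρ, Measure.smul_apply, smul_eq_mul, ← mul_assoc,
      ENNReal.mul_inv_cancel (by norm_num) (by norm_num), one_mul, Measure.add_apply]
    exact le_add_right le_rfl
  have hν0 : ν (s₀ ∆ s) = 0 := by
    refine key ν hν ?_
    rw [hρ, Measure.smul_apply, smul_eq_mul, ← mul_assoc,
      ENNReal.mul_inv_cancel (by norm_num) (by norm_num), one_mul, Measure.add_apply]
    exact le_add_left le_rfl
  rw [measure_congr (measure_symmDiff_eq_zero_iff.mp hμ0).symm,
    measure_congr (measure_symmDiff_eq_zero_iff.mp hν0).symm]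
  exact h s₀ hs₀

lemma exists_countable_piSystem {α : Type*} {m : MeasurableSpace α}
    (h : @MeasurableSpace.CountablyGenerated α m) :
    ∃ C : Set (Set α), C.Countable ∧ IsPiSystem C ∧ MeasurableSpace.generateFrom C = m := by
  obtain ⟨b, hbc, hgen⟩ := h.isCountablyGenerated
  obtain ⟨f, hf⟩ : ∃ f : ℕ → Set α, insert Set.univ b = Set.range f :=
    (hbc.insert _).exists_eq_range ⟨_, Set.mem_insert _ _⟩
  refine ⟨Set.range (fun F : Finset ℕ => ⋂ i ∈ F, f i), Set.countable_range _, ?_, ?_⟩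
  · rintro _ ⟨F, rfl⟩ _ ⟨G, rfl⟩ -
    refine ⟨F ∪ G, ?_⟩
    ext x; simp [Finset.mem_union, or_imp, forall_and]
  · apply le_antisymm
    · refine MeasurableSpace.generateFrom_le ?_
      rintro _ ⟨F, rfl⟩
      refine Finset.measurableSet_biInter F fun k _ => ?_
      have hk : f k ∈ insert Set.univ b := hf ▸ Set.mem_range_self k
      rcases hk with hk | hk
      · rw [hk]; exact MeasurableSet.univ
      · exact hgen ▸ MeasurableSpace.measurableSet_generateFrom hk
    · rw [hgen]
      refine MeasurableSpace.generateFrom_le fun s hs => ?_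
      have : s ∈ Set.range f := hf ▸ Set.mem_insert_of_mem _ hs
      obtain ⟨k, rfl⟩ := this
      exact MeasurableSpace.measurableSet_generateFrom ⟨{k}, by simp⟩

lemma countablyGenerated_iSup {α ι : Type*} [Countable ι] {m : ι → MeasurableSpace α}
    (h : ∀ i, @MeasurableSpace.CountablyGenerated α (m i)) :
    @MeasurableSpace.CountablyGenerated α (⨆ i, m i) := by
  choose b hb hgen using fun i => (h i).isCountablyGenerated
  refine @MeasurableSpace.CountablyGenerated.mk α (⨆ i, m i)
    ⟨⋃ i, b i, Set.countable_iUnion hb, ?_⟩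
  rw [iSup_congr hgen, MeasurableSpace.iSup_generateFrom]

noncomputable def basePi {n : ℕ} {T : Fin n → Type*} [mT : ∀ j, MeasurableSpace (T j)]
    (hT : ∀ j, ∃ m₀ : MeasurableSpace (T j), @MeasurableSpace.CountablyGenerated (T j) m₀ ∧
      mT j = univCompletion m₀) (i : Fin n) :
    MeasurableSpace (∀ j : {j : Fin n // j ≠ i}, T j) :=
  ⨆ j : {j : Fin n // j ≠ i},
    MeasurableSpace.comap (fun u : ∀ j : {j : Fin n // j ≠ i}, T j => u j) (hT j.1).choose

noncomputable def baseE {S : Type*} [mS : MeasurableSpace S]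
    {n : ℕ} {T : Fin n → Type*} [mT : ∀ j, MeasurableSpace (T j)]
    (hS : ∃ m₀ : MeasurableSpace S, @MeasurableSpace.CountablyGenerated S m₀ ∧
      mS = univCompletion m₀)
    (hT : ∀ j, ∃ m₀ : MeasurableSpace (T j), @MeasurableSpace.CountablyGenerated (T j) m₀ ∧
      mT j = univCompletion m₀) (i : Fin n) :
    MeasurableSpace (S × ∀ j : {j : Fin n // j ≠ i}, T j) :=
  MeasurableSpace.comap Prod.fst hS.choose ⊔
    MeasurableSpace.comap Prod.snd (basePi hT i)

/-- Proposition 2.1(ii): if the σ-algebras are universal completions of countably generated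
σ-algebras, the belief profile `η` is consistent under a common prior `p`, and `p ≪ ν` for a
product probability measure `ν`, then each belief map has a version `η̃_i` that is dominated
by `ν₀ ⊗ ν_{-i}` at *every* type and agrees with `η_i` for `(p ∘ π_i⁻¹)`-a.e. type. -/
theorem exists_dominated_version_of_beliefs
    {n : ℕ} {S : Type*} [mS : MeasurableSpace S]
    {T : Fin n → Type*} [mT : ∀ j, MeasurableSpace (T j)]
    (hS : ∃ m₀ : MeasurableSpace S, @MeasurableSpace.CountablyGenerated S m₀ ∧
      mS = univCompletion m₀)
    (hT : ∀ j, ∃ m₀ : MeasurableSpace (T j), @MeasurableSpace.CountablyGenerated (T j) m₀ ∧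
      mT j = univCompletion m₀)
    (η : ∀ i : Fin n, Kernel (T i) (S × (∀ j : {j : Fin n // j ≠ i}, T j)))
    [∀ i, IsMarkovKernel (η i)]
    (p : Measure (S × (∀ j, T j))) [IsProbabilityMeasure p]
    (hcons : ∀ i : Fin n,
      p.map (fun x : S × (∀ j, T j) => (x.2 i, (x.1, fun j : {j : Fin n // j ≠ i} => x.2 j)))
        = (p.map (fun x : S × (∀ j, T j) => x.2 i)) ⊗ₘ η i)
    (ν0 : Measure S) [IsProbabilityMeasure ν0]
    (ν : ∀ j, Measure (T j)) [∀ j, IsProbabilityMeasure (ν j)]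
    (hac : p ≪ ν0.prod (Measure.pi ν)) :
    ∀ i : Fin n, ∃ ηt : Kernel (T i) (S × (∀ j : {j : Fin n // j ≠ i}, T j)),
      IsMarkovKernel ηt ∧
      (∀ t : T i, ηt t ≪ ν0.prod (Measure.pi (fun j : {j : Fin n // j ≠ i} => ν j))) ∧
      (∀ᵐ t ∂(p.map (fun x : S × (∀ j, T j) => x.2 i)), ηt t = η i t) := by
  classical
  intro i
  set Tm := ∀ j : {j : Fin n // j ≠ i}, T j with hTm
  set lam : Measure (S × Tm) :=
    ν0.prod (Measure.pi fun j : {j : Fin n // j ≠ i} => ν j) with hlam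
  haveI : IsProbabilityMeasure lam := by rw [hlam]; infer_instance
  set μ : Measure (T i) := p.map (fun x : S × (∀ j, T j) => x.2 i) with hμdef
  have hπmeas : Measurable (fun x : S × (∀ j, T j) => x.2 i) :=
    (measurable_pi_apply i).comp measurable_snd
  haveI : IsProbabilityMeasure μ := Measure.isProbabilityMeasure_map hπmeas.aemeasurable
  have hφ0 : Measurable (fun x : S × (∀ j, T j) =>
      ((x.2 i, (x.1, fun j : {j : Fin n // j ≠ i} => x.2 j)) : T i × (S × Tm))) :=
    hπmeas.prodMk (measurable_fst.prodMk
      (measurable_pi_lambda (fun x : S × (∀ j, T j) => fun j : {j : Fin n // j ≠ i} => x.2 j)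
        (fun j => (measurable_pi_apply j.1).comp measurable_snd)))
  set φ : (S × (∀ j, T j)) → (T i × (S × Tm)) :=
    fun x => (x.2 i, (x.1, fun j : {j : Fin n // j ≠ i} => x.2 j)) with hφdef
  have hφ : Measurable φ := hφ0
  set ν' : Measure (T i × (S × Tm)) := (ν i).prod lam with hν'def
  set Q : Measure (T i × (S × Tm)) := p.map φ with hQdef
  have hQC : Q = μ ⊗ₘ η i := hcons i
  -- the product measure is mapped to the rearranged product measure
  have hmapν : (ν0.prod (Measure.pi ν)).map φ = ν' := by
    letI hU : Unique {j : Fin n // ¬j ≠ i} :=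
      ⟨⟨⟨i, by simp⟩⟩, fun j => Subtype.ext (not_ne_iff.mp j.2)⟩
    have h1 : MeasurePreserving
        (Prod.map (id : S → S) (MeasurableEquiv.piEquivPiSubtypeProd T (fun j => j ≠ i)))
        (ν0.prod (Measure.pi ν))
        (ν0.prod ((Measure.pi fun j : {j : Fin n // j ≠ i} => ν j).prod
          (Measure.pi fun j : {j : Fin n // ¬j ≠ i} => ν j))) :=
      (MeasurePreserving.id ν0).prod
        (measurePreserving_piEquivPiSubtypeProd (fun j => ν j) (fun j => j ≠ i))
    have h2 : MeasurePreserving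
        (Prod.map (id : S → S) (Prod.map (id : Tm → Tm)
          (MeasurableEquiv.piUnique (fun j : {j : Fin n // ¬j ≠ i} => T j.1))))
        (ν0.prod ((Measure.pi fun j : {j : Fin n // j ≠ i} => ν j).prod
          (Measure.pi fun j : {j : Fin n // ¬j ≠ i} => ν j)))
        (ν0.prod ((Measure.pi fun j : {j : Fin n // j ≠ i} => ν j).prod (ν i))) :=
      by
        have h2a := measurePreserving_piUnique (fun j : {j : Fin n // ¬j ≠ i} => ν j.1)
        have h2b : MeasurePreserving
            (MeasurableEquiv.piUnique (fun j : {j : Fin n // ¬j ≠ i} => T j.1))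
            (Measure.pi fun j : {j : Fin n // ¬j ≠ i} => ν j.1) (ν i) := h2a
        exact (MeasurePreserving.id ν0).prod ((MeasurePreserving.id _).prod h2b)
    have h3 : MeasurePreserving
        (MeasurableEquiv.prodAssoc.symm : S × (Tm × T i) ≃ᵐ (S × Tm) × T i)
        (ν0.prod ((Measure.pi fun j : {j : Fin n // j ≠ i} => ν j).prod (ν i)))
        ((ν0.prod (Measure.pi fun j : {j : Fin n // j ≠ i} => ν j)).prod (ν i)) :=
      (measurePreserving_prodAssoc ν0 _ (ν i)).symm MeasurableEquiv.prodAssoc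
    have h4 : MeasurePreserving (Prod.swap : (S × Tm) × T i → T i × (S × Tm))
        ((ν0.prod (Measure.pi fun j : {j : Fin n // j ≠ i} => ν j)).prod (ν i)) ν' :=
      Measure.measurePreserving_swap
    exact (((h4.comp h3).comp h2).comp h1).map_eq
  have hQν' : Q ≪ ν' := hmapν ▸ hac.map hφ
  set f : T i × (S × Tm) → ℝ≥0∞ := Q.rnDeriv ν' with hfdef
  have hf : Measurable f := Measure.measurable_rnDeriv _ _
  have hQeq : ν'.withDensity f = Q := Measure.withDensity_rnDeriv_eq Q ν' hQν'
  set h : T i → ℝ≥0∞ := fun t => ∫⁻ x, f (t, x) ∂lam with hhdef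
  have hh : Measurable h := hf.lintegral_prod_right'
  have hQprod : ∀ A B, MeasurableSet A → MeasurableSet B →
      Q (A ×ˢ B) = ∫⁻ t in A, ∫⁻ x in B, f (t, x) ∂lam ∂(ν i) := by
    intro A B hA hB
    rw [← hQeq, withDensity_apply _ (hA.prod hB), hν'def, ← Measure.prod_restrict,
      lintegral_prod _ hf.aemeasurable]
  have hμeq : μ = (ν i).withDensity h := by
    have h1 : μ = Q.fst := by rw [hQC, Measure.fst_compProd]
    refine Measure.ext fun A hA => ?_
    rw [h1, Measure.fst_apply hA, ← Set.prod_univ, hQprod A Set.univ hA MeasurableSet.univ,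
      withDensity_apply _ hA]
    simp only [Measure.restrict_univ, hhdef]
  have hμac : μ ≪ ν i := hμeq ▸ withDensity_absolutelyContinuous _ _
  have hint : ∫⁻ t, h t ∂(ν i) ≠ ∞ := by
    have : ((ν i).withDensity h) Set.univ = 1 := by rw [← hμeq]; exact measure_univ
    rw [withDensity_apply _ MeasurableSet.univ, Measure.restrict_univ] at this
    simp [this]
  have hfin : ∀ᵐ t ∂(ν i), h t ≠ ∞ := by
    filter_upwards [ae_lt_top hh hint] with t ht using ht.ne
  have hfinμ : ∀ᵐ t ∂μ, h t ≠ ∞ := hfin.filter_mono hμac.ae_le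
  have hne0 : ∀ᵐ t ∂μ, h t ≠ 0 := by
    have hz : μ (h ⁻¹' {0}) = 0 := by
      rw [hμeq, withDensity_apply _ (hh (measurableSet_singleton 0))]
      have hz0 : ∀ᵐ t ∂((ν i).restrict (h ⁻¹' {0})), h t = (fun _ => (0 : ℝ≥0∞)) t :=
        (ae_restrict_iff' (hh (measurableSet_singleton 0))).mpr
          (ae_of_all _ fun t ht => ht)
      rw [lintegral_congr_ae hz0, lintegral_zero]
    rw [ae_iff]
    simp only [ne_eq, not_not]
    exact hz
  -- the kernel
  set wd : T i → Measure (S × Tm) := fun t => lam.withDensity fun x => f (t, x) with hwddef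
  set Pt : Set (T i) := {t | h t ≠ 0 ∧ h t ≠ ∞} with hPtdef
  have hPt : MeasurableSet Pt :=
    ((hh (measurableSet_singleton 0)).compl).inter ((hh (measurableSet_singleton ∞)).compl)
  set κfun : T i → Measure (S × Tm) :=
    fun t => if t ∈ Pt then (h t)⁻¹ • wd t else lam with hκdef
  have hκt : ∀ u, κfun u = if u ∈ Pt then (h u)⁻¹ • wd u else lam := fun _ => rfl
  have hκmeas : Measurable κfun := by
    refine Measure.measurable_of_measurable_coe _ fun s hs => ?_
    have heq : (fun t => κfun t s) =
        fun t => if t ∈ Pt then (h t)⁻¹ * ∫⁻ x in s, f (t, x) ∂lam else lam s := by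
      funext t
      rw [hκt t]
      by_cases htP : t ∈ Pt
      · rw [if_pos htP, if_pos htP, Measure.smul_apply, smul_eq_mul, hwddef,
          withDensity_apply _ hs]
      · rw [if_neg htP, if_neg htP]
    rw [heq]
    exact Measurable.ite hPt (hh.inv.mul (hf.lintegral_prod_right'))
      measurable_const
  refine ⟨⟨κfun, hκmeas⟩, ?_, ?_, ?_⟩
  · constructor
    intro t
    constructor
    show κfun t Set.univ = 1
    rw [hκt t]
    by_cases htP : t ∈ Pt
    · rw [if_pos htP, Measure.smul_apply, smul_eq_mul, hwddef,
        withDensity_apply _ MeasurableSet.univ, Measure.restrict_univ]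
      exact ENNReal.inv_mul_cancel htP.1 htP.2
    · rw [if_neg htP]
      exact measure_univ
  · intro t
    show κfun t ≪ lam
    rw [hκt t]
    by_cases htP : t ∈ Pt
    · rw [if_pos htP]
      exact (withDensity_absolutelyContinuous lam _).smul_left _
    · rw [if_neg htP]
  -- the a.e. statement
  have hcgS := hS.choose_spec.1
  have hmS : mS = univCompletion hS.choose := hS.choose_spec.2
  have hcgT : ∀ j, @MeasurableSpace.CountablyGenerated (T j) (hT j).choose :=
    fun j => (hT j).choose_spec.1
  have hmT : ∀ j, mT j = univCompletion (hT j).choose := fun j => (hT j).choose_spec.2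
  have hEinst : (inferInstance : MeasurableSpace (S × Tm)) =
      MeasurableSpace.comap (Prod.fst : S × Tm → S) mS ⊔
        MeasurableSpace.comap (Prod.snd : S × Tm → Tm)
          (MeasurableSpace.pi : MeasurableSpace Tm) := rfl
  have hpiinst : (MeasurableSpace.pi : MeasurableSpace Tm) =
      ⨆ j : {j : Fin n // j ≠ i}, MeasurableSpace.comap (fun u : Tm => u j) (mT j.1) := rfl
  have hle_S : hS.choose ≤ mS := le_trans (le_univCompletion hS.choose) (le_of_eq hmS.symm)
  have hle_T : ∀ j, (hT j).choose ≤ mT j :=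
    fun j => le_trans (le_univCompletion (hT j).choose) (le_of_eq (hmT j).symm)
  have h₀ : baseE hS hT i ≤ (inferInstance : MeasurableSpace (S × Tm)) := by
    rw [hEinst]
    refine sup_le (le_trans (MeasurableSpace.comap_mono hle_S) le_sup_left)
      (le_trans (MeasurableSpace.comap_mono ?_) le_sup_right)
    rw [hpiinst]
    exact iSup_mono fun j => MeasurableSpace.comap_mono (hle_T j.1)
  have hup : (inferInstance : MeasurableSpace (S × Tm)) ≤ univCompletion (baseE hS hT i) := by
    rw [hEinst]
    refine sup_le ?_ ?_
    · refine le_trans (MeasurableSpace.comap_mono (le_of_eq hmS)) ?_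
      have : MeasurableSpace.comap (Prod.fst : S × Tm → S) (univCompletion hS.choose) ≤
          univCompletion (baseE hS hT i) :=
        comap_univCompletion_le (baseE hS hT i) hS.choose
          (@measurable_fst _ _ hS.choose (basePi hT i))
      exact this
    · rw [hpiinst, MeasurableSpace.comap_iSup]
      refine iSup_le fun j => ?_
      rw [MeasurableSpace.comap_comp]
      refine le_trans (MeasurableSpace.comap_mono (le_of_eq (hmT j.1))) ?_
      exact comap_univCompletion_le (baseE hS hT i) (hT j.1).choose
        ((@measurable_pi_apply _ _ (fun j : {j : Fin n // j ≠ i} => (hT j.1).choose) j).comp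
          (@measurable_snd _ _ hS.choose (basePi hT i)))
  have hcgpi : @MeasurableSpace.CountablyGenerated Tm (basePi hT i) := by
    refine countablyGenerated_iSup fun j => ?_
    exact @MeasurableSpace.CountablyGenerated.comap Tm (T j.1) (hT j.1).choose (hcgT j.1)
      (fun u : Tm => u j)
  have hcgE : @MeasurableSpace.CountablyGenerated (S × Tm) (baseE hS hT i) := by
    have c1 := @MeasurableSpace.CountablyGenerated.comap (S × Tm) S hS.choose hcgS Prod.fst
    have c2 := @MeasurableSpace.CountablyGenerated.comap (S × Tm) Tm (basePi hT i) hcgpi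
      Prod.snd
    exact MeasurableSpace.CountablyGenerated.sup c1 c2
  obtain ⟨C, hCc, hCpi, hCgen⟩ := exists_countable_piSystem hcgE
  have hCmeas : ∀ B ∈ C, MeasurableSet[baseE hS hT i] B := fun B hB =>
    hCgen ▸ MeasurableSpace.measurableSet_generateFrom hB
  have claim : ∀ B, MeasurableSet[baseE hS hT i] B →
      ∀ᵐ t ∂μ, η i t B * h t = ∫⁻ x in B, f (t, x) ∂lam := by
    intro B hB0
    have hB : MeasurableSet B := MeasurableSpace.le_def.mp h₀ _ hB0
    have base : (fun t => η i t B * h t) =ᵐ[ν i] fun t => ∫⁻ x in B, f (t, x) ∂lam := by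
      refine ae_eq_of_forall_setLIntegral_eq_of_sigmaFinite
        (((η i).measurable_coe hB).mul hh) (hf.lintegral_prod_right') fun s hs _ => ?_
      calc ∫⁻ t in s, η i t B * h t ∂(ν i)
          = ∫⁻ t in s, η i t B ∂((ν i).withDensity h) := by
            rw [setLIntegral_withDensity_eq_setLIntegral_mul _ hh ((η i).measurable_coe hB) hs]
            exact setLIntegral_congr_fun hs (fun t _ => mul_comm _ _)
        _ = ∫⁻ t in s, η i t B ∂μ := by rw [← hμeq]
        _ = (μ ⊗ₘ η i) (s ×ˢ B) := (Measure.compProd_apply_prod hs hB).symm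
        _ = Q (s ×ˢ B) := by rw [hQC]
        _ = ∫⁻ t in s, ∫⁻ x in B, f (t, x) ∂lam ∂(ν i) := hQprod s B hs hB
    exact base.filter_mono hμac.ae_le
  have hae_all : ∀ᵐ t ∂μ, ∀ B ∈ C, η i t B * h t = ∫⁻ x in B, f (t, x) ∂lam :=
    (ae_ball_iff hCc).mpr fun B hB => claim B (hCmeas B hB)
  filter_upwards [hae_all, hne0, hfinμ] with t hBall ht0 htop
  have htP : t ∈ Pt := ⟨ht0, htop⟩
  show κfun t = η i t
  rw [hκt t, if_pos htP]
  set m1 : Measure (S × Tm) := (h t)⁻¹ • wd t with hm1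
  have hm1P : IsProbabilityMeasure m1 := by
    constructor
    rw [hm1, Measure.smul_apply, smul_eq_mul, hwddef,
      withDensity_apply _ MeasurableSet.univ, Measure.restrict_univ]
    exact ENNReal.inv_mul_cancel ht0 htop
  have hm1C : ∀ B ∈ C, m1 B = η i t B := by
    intro B hB
    have hBm := hCmeas B hB
    rw [hm1, Measure.smul_apply, smul_eq_mul, hwddef, withDensity_apply _ (MeasurableSpace.le_def.mp h₀ _ hBm),
      ← hBall B hB, mul_comm (η i t B) (h t), ← mul_assoc, ENNReal.inv_mul_cancel ht0 htop,
      one_mul]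
  haveI hfin1 : IsFiniteMeasure (m1.trim h₀) := by
    constructor
    rw [trim_measurableSet_eq h₀ MeasurableSet.univ, measure_univ]
    exact ENNReal.one_lt_top
  haveI hfin2 : IsFiniteMeasure ((η i t).trim h₀) := by
    constructor
    rw [trim_measurableSet_eq h₀ MeasurableSet.univ, measure_univ]
    exact ENNReal.one_lt_top
  have htrim : m1.trim h₀ = (η i t).trim h₀ := by
    refine @ext_of_generate_finite _ (baseE hS hT i) (m1.trim h₀) ((η i t).trim h₀) C hCgen.symm hCpi
      hfin1 ?_ ?_
    · intro s hsC
      rw [trim_measurableSet_eq h₀ (hCmeas s hsC), trim_measurableSet_eq h₀ (hCmeas s hsC)]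
      exact hm1C s hsC
    · rw [trim_measurableSet_eq h₀ MeasurableSet.univ,
        trim_measurableSet_eq h₀ MeasurableSet.univ, measure_univ, measure_univ]
  have hall : ∀ s, MeasurableSet[baseE hS hT i] s → m1 s = η i t s := fun s hs => by
    rw [← trim_measurableSet_eq h₀ hs, htrim, trim_measurableSet_eq h₀ hs]
  exact measure_ext_of_univCompletion h₀ hup m1 (η i t) hm1P inferInstance hall
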